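/- The characteristic polynomials p_k of the matrices N_k satisfy the recursion p_k(x) = (x² − 4x + 2) p_{k−1}(x) − p_{k−2}(x) for k ≥ 2, with p₀(x) = (x² − 5x + 3)(x − 2)² and p₁(x) = (x³ − 8x² + 17x − 5)(x − 2)²(x − 1). -/

import Mathlib

open Polynomial Matrix

/-- The matrix `N_k = A_kᵀ A_k` of size `4 + 2k` (indexed from `0`): it is the
tridiagonal-plus-corner matrix with diagonal `(2, 2, 3, 2, 2, …, 2)`, entries
`N(0,2) = N(2,0) = N(1,2) = N(2,1) = 1`, `N(0,1) = N(1,0) = 0`, and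
`N(i, i+1) = N(i+1, i) = 1` for `i ≥ 2`; all other entries are `0`. -/
def NMat (k : ℕ) : Matrix (Fin (4 + 2 * k)) (Fin (4 + 2 * k)) ℚ := fun i j =>
  if (i : ℕ) = (j : ℕ) then (if (i : ℕ) = 2 then 3 else 2)
  else if ((i : ℕ) = 0 ∧ (j : ℕ) = 2) ∨ ((i : ℕ) = 2 ∧ (j : ℕ) = 0) ∨
          ((i : ℕ) = 1 ∧ (j : ℕ) = 2) ∨ ((i : ℕ) = 2 ∧ (j : ℕ) = 1) then 1
  else if ((j : ℕ) = (i : ℕ) + 1 ∧ 2 ≤ (i : ℕ)) ∨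
          ((i : ℕ) = (j : ℕ) + 1 ∧ 2 ≤ (j : ℕ)) then 1
  else 0

/-- Generic entry of the characteristic matrix `X·I − N`. -/
noncomputable def ent (i j : ℕ) : Polynomial ℚ :=
  if i = j then (if i = 2 then X - 3 else X - 2)
  else if (i = 0 ∧ j = 2) ∨ (i = 2 ∧ j = 0) ∨ (i = 1 ∧ j = 2) ∨ (i = 2 ∧ j = 1) then -1
  else if (j = i + 1 ∧ 2 ≤ i) ∨ (i = j + 1 ∧ 2 ≤ j) then -1
  else 0

/-- The `n × n` characteristic matrix. -/
noncomputable def Mg (n : ℕ) : Matrix (Fin n) (Fin n) (Polynomial ℚ) := fun i j => ent i j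

lemma ent_zero {i j : ℕ} (h : 3 ≤ i ∨ 3 ≤ j) (h1 : i + 1 ≠ j) (h2 : i ≠ j)
    (h3 : i ≠ j + 1) : ent i j = 0 := by
  unfold ent
  split_ifs with a b c <;> first | rfl | omega

lemma ent_offdiag {i : ℕ} (hi : 2 ≤ i) : ent i (i + 1) = -1 ∧ ent (i + 1) i = -1 := by
  unfold ent
  constructor <;> (split_ifs with a b c <;> first | rfl | omega)

lemma ent_diag {i : ℕ} (hi : 3 ≤ i) : ent i i = X - 2 := by
  unfold ent
  split_ifs with a b <;> first | rfl | omega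

lemma sub_cast (n : ℕ) :
    (Mg (n + 1)).submatrix Fin.castSucc Fin.castSucc = Mg n := rfl

lemma inner (n : ℕ) :
    ((Mg (n + 5)).submatrix Fin.castSucc
      (Fin.succAbove ⟨n + 3, by omega⟩)).det = -(Mg (n + 3)).det := by
  set a : Fin (n + 5) := ⟨n + 3, by omega⟩ with ha
  have hlast : a.succAbove (Fin.last (n + 3)) = Fin.last (n + 4) := by
    rw [Fin.succAbove_of_le_castSucc]
    · rfl
    · rw [Fin.le_def]; simp [ha]
  have hcol : ∀ j : Fin (n + 3), a.succAbove (Fin.castSucc j) = Fin.castSucc (Fin.castSucc j) := by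
    intro j
    rw [Fin.succAbove_of_castSucc_lt]
    rw [Fin.lt_def]
    exact j.isLt
  rw [det_succ_column _ (Fin.last (n + 3)),
    Finset.sum_eq_single_of_mem (Fin.last (n + 3)) (Finset.mem_univ _) ?side]
  case side =>
    intro c _ hc
    have h2 : (c : ℕ) < n + 3 := by
      have := c.isLt
      rcases Nat.lt_or_ge (c : ℕ) (n + 3) with h | h
      · exact h
      · exact absurd (Fin.ext (by omega : (c : ℕ) = n + 3)) hc
    have : (Mg (n + 5)).submatrix Fin.castSucc a.succAbove c (Fin.last (n + 3)) = 0 := by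
      rw [Matrix.submatrix_apply, hlast]
      show ent c (n + 4) = 0
      exact ent_zero (Or.inr (by omega)) (by omega) (by omega) (by omega)
    rw [this]; ring
  · have hentry : (Mg (n + 5)).submatrix Fin.castSucc a.succAbove
        (Fin.last (n + 3)) (Fin.last (n + 3)) = -1 := by
      rw [Matrix.submatrix_apply, hlast]
      show ent (n + 3) (n + 4) = -1
      exact (ent_offdiag (by omega)).1
    have hsub : ((Mg (n + 5)).submatrix Fin.castSucc a.succAbove).submatrix
        (Fin.last (n + 3)).succAbove (Fin.last (n + 3)).succAbove = Mg (n + 3) := by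
      ext i j
      simp only [Fin.succAbove_last, Matrix.submatrix_apply, hcol]
      rfl
    rw [hentry, hsub]
    have : ((Fin.last (n + 3) : Fin (n + 4)) : ℕ) = n + 3 := rfl
    rw [this]
    have hpow : ((-1 : Polynomial ℚ)) ^ (n + 3 + (n + 3)) = 1 := by
      rw [show n + 3 + (n + 3) = 2 * (n + 3) by ring, pow_mul]
      norm_num
    rw [hpow]; ring

/-- The three-term tridiagonal determinant recursion. -/
lemma step (n : ℕ) :
    (Mg (n + 5)).det = (X - 2) * (Mg (n + 4)).det - (Mg (n + 3)).det := by
  rw [det_succ_row (Mg (n + 5)) (Fin.last (n + 4)),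
    Finset.sum_eq_add_of_mem (⟨n + 3, by omega⟩ : Fin (n + 5)) (Fin.last (n + 4))
      (Finset.mem_univ _) (Finset.mem_univ _)
      (by simp [Fin.ext_iff])
      (by
        intro c _ hc
        have h1 : (c : ℕ) ≠ n + 3 := fun h => hc.1 (Fin.ext h)
        have h2 : (c : ℕ) ≠ n + 4 := fun h => hc.2 (Fin.ext h)
        have : Mg (n + 5) (Fin.last (n + 4)) c = 0 := by
          show ent (n + 4) c = 0
          exact ent_zero (Or.inl (by omega)) (by omega) (by omega) (by omega)
        rw [this]; ring)]
  have e1 : Mg (n + 5) (Fin.last (n + 4)) ⟨n + 3, by omega⟩ = -1 := by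
    show ent (n + 4) (n + 3) = -1
    exact (ent_offdiag (by omega)).2
  have e2 : Mg (n + 5) (Fin.last (n + 4)) (Fin.last (n + 4)) = X - 2 := by
    show ent (n + 4) (n + 4) = X - 2
    exact ent_diag (by omega)
  have e3 : ((Mg (n + 5)).submatrix (Fin.last (n + 4)).succAbove
      (Fin.last (n + 4)).succAbove).det = (Mg (n + 4)).det := by
    rw [Fin.succAbove_last, sub_cast]
  have e4 : ((Mg (n + 5)).submatrix (Fin.last (n + 4)).succAbove
      (Fin.succAbove ⟨n + 3, by omega⟩)).det = -(Mg (n + 3)).det := by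
    rw [Fin.succAbove_last]
    exact inner n
  rw [e1, e2, e3, e4]
  have c1 : ((Fin.last (n + 4) : Fin (n + 5)) : ℕ) = n + 4 := rfl
  have c2 : (((⟨n + 3, by omega⟩ : Fin (n + 5))) : ℕ) = n + 3 := rfl
  rw [c1, c2]
  have hp1 : ((-1 : Polynomial ℚ)) ^ (n + 4 + (n + 3)) = -1 := by
    rw [show n + 4 + (n + 3) = 2 * (n + 3) + 1 by ring, pow_succ, pow_mul]
    norm_num
  have hp2 : ((-1 : Polynomial ℚ)) ^ (n + 4 + (n + 4)) = 1 := by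
    rw [show n + 4 + (n + 4) = 2 * (n + 4) by ring, pow_mul]
    norm_num
  rw [hp1, hp2]
  ring

lemma Mg3_det : (Mg 3).det = (X - 2) * ((X - 2) * (X - 3) - 2) := by
  rw [det_fin_three]
  norm_num [Mg, ent]
  ring

set_option maxHeartbeats 1000000 in
lemma Mg4_det : (Mg 4).det = (X ^ 2 - 5 * X + 3) * (X - 2) ^ 2 := by
  have h : Mg 4 = !![X-2, 0, -1, 0; 0, X-2, -1, 0; -1, -1, X-3, -1; 0, 0, -1, X-2] := by
    ext i j
    fin_cases i <;> fin_cases j <;> rfl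
  rw [h]
  simp [Matrix.det_succ_row_zero, Fin.sum_univ_succ, Fin.succAbove]
  ring

lemma Mg6_det : (Mg 6).det = (X ^ 3 - 8 * X ^ 2 + 17 * X - 5) * (X - 2) ^ 2 * (X - 1) := by
  have h1 := step 1
  have h2 := step 0
  norm_num at h1 h2
  rw [h1, h2, Mg4_det, Mg3_det]
  ring

lemma step2 (m : ℕ) :
    (Mg (m + 8)).det = (X ^ 2 - 4 * X + 2) * (Mg (m + 6)).det - (Mg (m + 4)).det := by
  have h1 := step (m + 3)
  have h2 := step (m + 2)
  have h3 := step (m + 1)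
  rw [show m+3+5 = m+8 from by omega, show m+3+4 = m+7 from by omega,
    show m+3+3 = m+6 from by omega] at h1
  rw [show m+2+5 = m+7 from by omega, show m+2+4 = m+6 from by omega,
    show m+2+3 = m+5 from by omega] at h2
  rw [show m+1+5 = m+6 from by omega, show m+1+4 = m+5 from by omega,
    show m+1+3 = m+4 from by omega] at h3
  linear_combination h1 + (X - 2) * h2 + h3

lemma cm_eq (k : ℕ) : (NMat k).charpoly = (Mg (4 + 2 * k)).det := by
  unfold Matrix.charpoly
  congr 1
  apply Matrix.ext
  intro i j
  by_cases h : i = j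
  · subst h
    rw [charmatrix_apply_eq]
    show X - C (NMat k i i) = ent i i
    unfold NMat ent
    simp only [if_pos rfl]
    split_ifs with h2 <;> simp [map_ofNat]
  · rw [charmatrix_apply_ne _ _ _ h]
    show -C (NMat k i j) = ent i j
    have h' : (i : ℕ) ≠ (j : ℕ) := fun hh => h (Fin.ext hh)
    unfold NMat ent
    rw [if_neg h', if_neg h']
    split_ifs <;> simp [map_ofNat]

/-- The characteristic polynomials `p_k(x) = det(x·I − N_k)` satisfy the recursion
`p_k = (x² − 4x + 2) p_{k−1} − p_{k−2}` for `k ≥ 2`, with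
`p₀ = (x² − 5x + 3)(x − 2)²` and `p₁ = (x³ − 8x² + 17x − 5)(x − 2)²(x − 1)`. -/
theorem stmt_6 :
    (∀ k : ℕ, (NMat (k + 2)).charpoly =
        (X ^ 2 - 4 * X + 2) * (NMat (k + 1)).charpoly - (NMat k).charpoly) ∧
    (NMat 0).charpoly = (X ^ 2 - 5 * X + 3) * (X - 2) ^ 2 ∧
    (NMat 1).charpoly = (X ^ 3 - 8 * X ^ 2 + 17 * X - 5) * (X - 2) ^ 2 * (X - 1) := by
  refine ⟨fun k => ?_, ?_, ?_⟩
  · rw [cm_eq (k + 2), cm_eq (k + 1), cm_eq k]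
    rw [show 4 + 2 * (k + 2) = 2 * k + 8 from by omega,
      show 4 + 2 * (k + 1) = 2 * k + 6 from by omega,
      show 4 + 2 * k = 2 * k + 4 from by omega]
    exact step2 (2 * k)
  · rw [cm_eq 0, show 4 + 2 * 0 = 4 from by norm_num]
    exact Mg4_det
  · rw [cm_eq 1, show 4 + 2 * 1 = 6 from by norm_num]
    exact Mg6_det
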